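/- Fix a function e : ℕ×ℕ → ℕ which is a bijection from ℕ×ℕ onto the positive integers. Let u' be a 0–1 sequence with associated real u such that u'(4m+1) = 0 and u'(4m+3) = 1 for every m ∈ ℕ, and for every k ∈ ℕ there exists exactly one m ∈ ℕ with u'(2·e(k,m)) = 1. Then there exists exactly one function α : ℕ → ℕ such that for all k, m ∈ ℕ: α(k) = m if and only if the predicate [u, 2·e(k,m)] fails. -/

import Mathlib

/-- `x'` is a 0–1 sequence: defined on positive integers with values in {0,1}. -/
def IsZeroOne (x' : ℕ → ℕ) : Prop := ∀ i, 1 ≤ i → x' i = 0 ∨ x' i = 1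

/-- The real number associated to a 0–1 sequence: `Σ_{i=1}^∞ x'(i)·2^{-i}`. -/
noncomputable def assocReal (x' : ℕ → ℕ) : ℝ := ∑' i : ℕ, (x' (i + 1) : ℝ) / 2 ^ (i + 1)

/-- A real `y` is `p`-rational if `y·2^p` is a natural number. -/
def IsPRational (p : ℕ) (y : ℝ) : Prop := ∃ q : ℕ, y * 2 ^ p = (q : ℝ)

/-- The predicate `[x, p]` (for `p ≥ 1`): there is a `(p-1)`-rational `y` with
`0 < x - y < 1/2^p`. -/
def BracketPred (x : ℝ) (p : ℕ) : Prop :=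
  ∃ y : ℝ, IsPRational (p - 1) y ∧ 0 < x - y ∧ x - y < 1 / 2 ^ p

/-- A 0–1 sequence is alternating if `x'(4m+1) = 0` and `x'(4m+3) = 1` for all `m`. -/
def Alternating (x' : ℕ → ℕ) : Prop := ∀ m : ℕ, x' (4 * m + 1) = 0 ∧ x' (4 * m + 3) = 1

lemma zo_le_one (x' : ℕ → ℕ) (h : IsZeroOne x') (i : ℕ) : x' (i + 1) ≤ 1 := by
  rcases h (i+1) (by omega) with h | h <;> omega

lemma summable01 (x' : ℕ → ℕ) (h : IsZeroOne x') :
    Summable (fun i : ℕ => (x' (i+1) : ℝ) / 2 ^ (i+1)) := by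
  apply Summable.of_nonneg_of_le (fun i => by positivity) (fun i => ?_) summable_geometric_two
  have h1 : (x' (i+1) : ℝ) ≤ 1 := by exact_mod_cast zo_le_one x' h i
  calc (x' (i+1) : ℝ) / 2 ^ (i+1) ≤ 1 / 2 ^ (i+1) := by
        apply div_le_div_of_nonneg_right h1 (by positivity) |>.trans_eq rfl
    _ ≤ 1 / 2 ^ i := by
        apply div_le_div_of_nonneg_left (by norm_num) (by positivity)
        exact pow_le_pow_right₀ (by norm_num) (by omega)
    _ = (1/2 : ℝ) ^ i := by rw [one_div, ← inv_pow, inv_pow, ← one_div, div_pow, one_pow]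

lemma assoc_nonneg (x' : ℕ → ℕ) : 0 ≤ assocReal x' := by
  apply tsum_nonneg; intro i; positivity

lemma assoc_pos (x' : ℕ → ℕ) (h : IsZeroOne x') (j : ℕ) (hj : x' (j + 1) = 1) :
    0 < assocReal x' := by
  have := Summable.le_tsum (summable01 x' h) j (fun i _ => by positivity)
  have h2 : (0:ℝ) < (x' (j+1) : ℝ) / 2 ^ (j+1) := by rw [hj]; positivity
  exact h2.trans_le this

lemma tsum_halves : ∑' i : ℕ, (1:ℝ) / 2 ^ (i+1) = 1 := by
  have : ∀ i : ℕ, (1:ℝ) / 2 ^ (i+1) = (1/2) * (1/2)^i := by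
    intro i; rw [div_pow, one_pow, pow_succ]; ring
  rw [tsum_congr this, tsum_mul_left, tsum_geometric_two]; norm_num

lemma summable_halves : Summable (fun i : ℕ => (1:ℝ) / 2 ^ (i+1)) := by
  have := summable_geometric_two.mul_left ((1:ℝ)/2)
  apply this.congr
  intro i
  rw [div_pow, one_pow, pow_succ]
  ring

lemma assoc_lt_one (x' : ℕ → ℕ) (h : IsZeroOne x') (j : ℕ) (hj : x' (j + 1) = 0) :
    assocReal x' < 1 := by
  rw [← tsum_halves]
  refine Summable.tsum_lt_tsum_of_nonneg (i := j) (fun i => by positivity) (fun i => ?_) ?_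
    summable_halves
  · have h1 : (x' (i+1) : ℝ) ≤ 1 := by exact_mod_cast zo_le_one x' h i
    exact div_le_div_of_nonneg_right h1 (by positivity)
  · have hz : ((x' (j+1):ℝ))/2^(j+1) = 0 := by rw [hj]; simp
    rw [hz]
    positivity

/-- split of assocReal -/
lemma assoc_split (x' : ℕ → ℕ) (h : IsZeroOne x') (p : ℕ) :
    assocReal x' * 2 ^ p =
      (∑ i ∈ Finset.range p, (x' (i+1) : ℕ) * 2 ^ (p - 1 - i) : ℕ) +
      assocReal (fun i => x' (p + i)) := by
  have hsum := summable01 x' h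
  have hsplit := Summable.sum_add_tsum_nat_add p hsum
  have htail : (∑' i : ℕ, (x' (i + p + 1) : ℝ) / 2 ^ (i + p + 1)) * 2 ^ p
      = assocReal (fun i => x' (p + i)) := by
    rw [← tsum_mul_right]
    unfold assocReal
    apply tsum_congr; intro i
    show (x' (i + p + 1) : ℝ) / 2 ^ (i + p + 1) * 2 ^ p = (x' (p + (i + 1)) : ℝ) / 2 ^ (i + 1)
    rw [show p + (i + 1) = i + p + 1 by omega,
      show (2:ℝ) ^ (i + p + 1) = 2 ^ (i + 1) * 2 ^ p by rw [← pow_add]; congr 1; omega]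
    field_simp
  have hhead : (∑ i ∈ Finset.range p, (x' (i+1) : ℝ) / 2 ^ (i+1)) * 2 ^ p
      = ((∑ i ∈ Finset.range p, (x' (i+1) : ℕ) * 2 ^ (p - 1 - i) : ℕ) : ℝ) := by
    push_cast
    rw [Finset.sum_mul]
    apply Finset.sum_congr rfl
    intro i hi
    have hi' : i < p := Finset.mem_range.mp hi
    have h2 : (2:ℝ) ^ p = 2 ^ (i+1) * 2 ^ (p - 1 - i) := by
      rw [← pow_add]; congr 1; omega
    rw [h2]
    field_simp
  calc assocReal x' * 2 ^ p
      = ((∑ i ∈ Finset.range p, (x' (i+1) : ℝ) / 2 ^ (i+1))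
        + ∑' i : ℕ, (x' (i + p + 1) : ℝ) / 2 ^ (i + p + 1)) * 2 ^ p := by
        unfold assocReal; rw [hsplit]
    _ = _ := by rw [add_mul, htail, hhead]

/-- Characterization of BracketPred for assocReal -/
lemma bracket_iff (x' : ℕ → ℕ) (h : IsZeroOne x') (p : ℕ) (hp : 1 ≤ p)
    (hpos : 0 < assocReal (fun i => x' (p + i)))
    (hlt : assocReal (fun i => x' (p + i)) < 1) :
    (BracketPred (assocReal x') p ↔
      (∑ i ∈ Finset.range p, (x' (i+1) : ℕ) * 2 ^ (p - 1 - i)) % 2 = 0) := by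
  have hsplit := assoc_split x' h p
  set N : ℕ := ∑ i ∈ Finset.range p, (x' (i+1) : ℕ) * 2 ^ (p - 1 - i) with hN
  set f := assocReal (fun i => x' (p + i)) with hf
  constructor
  · rintro ⟨y, ⟨q, hq⟩, h1, h2⟩
    -- y * 2^p = 2q
    have hy2 : y * 2 ^ p = 2 * q := by
      have : (2:ℝ) ^ p = 2 ^ (p-1) * 2 := by rw [← pow_succ]; congr 1; omega
      rw [this, ← mul_assoc, hq]; ring
    have key : (2*q : ℝ) < N + f ∧ (N + f : ℝ) < 2*q + 1 := by
      constructor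
      · have := mul_lt_mul_of_pos_right h1 (show (0:ℝ) < 2^p by positivity)
        rw [sub_mul, hsplit, hy2] at this
        push_cast at this ⊢
        linarith
      · have := mul_lt_mul_of_pos_right h2 (show (0:ℝ) < 2^p by positivity)
        rw [sub_mul, hsplit, hy2, div_mul_cancel₀ _ (show (2:ℝ)^p ≠ 0 by positivity)] at this
        push_cast at this ⊢
        linarith
    obtain ⟨k1, k2⟩ := key
    have e1 : 2 * q ≤ N := by
      by_contra hc
      push_neg at hc
      have : (N:ℝ) + 1 ≤ 2*q := by exact_mod_cast hc
      linarith
    have e2 : N ≤ 2 * q := by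
      by_contra hc
      push_neg at hc
      have : (2*(q:ℝ)) + 1 ≤ N := by exact_mod_cast hc
      linarith
    omega
  · intro hpar
    obtain ⟨q, hq⟩ := Nat.even_iff.mpr hpar
    refine ⟨(N:ℝ) / 2 ^ p, ⟨q, ?_⟩, ?_, ?_⟩
    · have h2 : (2:ℝ) ^ p = 2 ^ (p-1) * 2 := by rw [← pow_succ]; congr 1; omega
      have hNq : (N:ℝ) = 2*q := by rw [hq]; push_cast; ring
      rw [h2, hNq]
      have hne : (2:ℝ)^(p-1) ≠ 0 := by positivity
      field_simp
    · have : assocReal x' - (N:ℝ)/2^p = f / 2^p := by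
        field_simp
        linarith [hsplit]
      rw [this]; positivity
    · have : assocReal x' - (N:ℝ)/2^p = f / 2^p := by
        field_simp
        linarith [hsplit]
      rw [this]
      gcongr

lemma parityN (x' : ℕ → ℕ) (p : ℕ) (hp : 1 ≤ p) :
    (∑ i ∈ Finset.range p, x' (i+1) * 2 ^ (p - 1 - i)) % 2 = x' p % 2 := by
  obtain ⟨q, rfl⟩ : ∃ q, p = q + 1 := ⟨p - 1, by omega⟩
  rw [Finset.sum_range_succ]
  have h2 : 2 ∣ ∑ i ∈ Finset.range q, x' (i+1) * 2 ^ (q + 1 - 1 - i) := by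
    apply Finset.dvd_sum
    intro i hi
    have : i < q := Finset.mem_range.mp hi
    exact Dvd.dvd.mul_left (dvd_pow_self 2 (by omega)) _
  have h3 : q + 1 - 1 - q = 0 := by omega
  rw [h3, pow_zero, mul_one]
  omega

lemma key_iff (u' : ℕ → ℕ) (hu' : IsZeroOne u') (halt : ∀ m : ℕ, u' (4 * m + 1) = 0 ∧ u' (4 * m + 3) = 1)
    (p : ℕ) (hp : 1 ≤ p) :
    (¬ BracketPred (assocReal u') p ↔ u' p = 1) := by
  have htail01 : IsZeroOne (fun i => u' (p + i)) := fun i hi => hu' (p + i) (by omega)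
  have hpos : 0 < assocReal (fun i => u' (p + i)) := by
    apply assoc_pos _ htail01 (3*p + 2)
    show u' (p + (3*p + 2 + 1)) = 1
    rw [show p + (3*p + 2 + 1) = 4*p + 3 by omega]
    exact (halt p).2
  have hlt : assocReal (fun i => u' (p + i)) < 1 := by
    apply assoc_lt_one _ htail01 (3*p)
    show u' (p + (3*p + 1)) = 0
    rw [show p + (3*p + 1) = 4*p + 1 by omega]
    exact (halt p).1
  rw [bracket_iff u' hu' p hp hpos hlt, parityN u' p hp]
  rcases hu' p hp with h | h <;> simp [h]

/-- If `u'` is an alternating 0–1 sequence such that for every `k` there is exactly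
one `m` with `u'(2·e(k,m)) = 1`, then there is exactly one `α : ℕ → ℕ` with
`α(k) = m ↔ ¬[u, 2·e(k,m)]` for all `k, m`. -/
theorem stmt17 (e : ℕ × ℕ → ℕ) (hinj : Function.Injective e)
    (hrange : Set.range e = {n : ℕ | 1 ≤ n})
    (u' : ℕ → ℕ) (hu' : IsZeroOne u') (u : ℝ) (hu : u = assocReal u')
    (halt : Alternating u')
    (hcode : ∀ k : ℕ, ∃! m : ℕ, u' (2 * e (k, m)) = 1) :
    ∃! α : ℕ → ℕ, ∀ k m : ℕ, α k = m ↔ ¬ BracketPred u (2 * e (k, m)) := by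
  have he : ∀ k m : ℕ, 1 ≤ e (k, m) := by
    intro k m
    have : e (k, m) ∈ Set.range e := ⟨(k, m), rfl⟩
    rw [hrange] at this
    exact this
  have key : ∀ k m : ℕ, ¬ BracketPred u (2 * e (k, m)) ↔ u' (2 * e (k, m)) = 1 := by
    intro k m
    rw [hu]
    exact key_iff u' hu' halt _ (by have := he k m; omega)
  refine ⟨fun k => Classical.choose (hcode k), ?_, ?_⟩
  · intro k m
    obtain ⟨hc1, hc2⟩ := Classical.choose_spec (hcode k)
    rw [key]
    constructor
    · rintro rfl; exact hc1
    · intro hm; exact (hc2 m hm).symm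
  · intro β hβ
    funext k
    have h1 : ¬ BracketPred u (2 * e (k, Classical.choose (hcode k))) := by
      rw [key]
      exact (Classical.choose_spec (hcode k)).1
    exact (hβ k _).mpr h1
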